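/- Let Q be a key polynomial and h_1, ..., h_s ∈ K[x] with deg(h_i) < deg(Q) for all i. Write the product Π h_i = qQ + r with deg(r) < deg(Q). Then ν(r) = ν(Π h_i) < ν(qQ). -/

import Mathlib

open Polynomial
open scoped Classical
noncomputable section

/-- `ν` is (the restriction to nonzero polynomials of) a valuation on `K[x]`,
nontrivial on `K`, with `ν(x) ≥ 0`.  Values are taken in a linearly ordered
field `Γ` (playing the role of the divisible hull of the value group). -/
structure IsVal {K : Type*} [Field K] {Γ : Type*} [Field Γ] [LinearOrder Γ] [IsStrictOrderedRing Γ]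
    (ν : Polynomial K → Γ) : Prop where
  map_mul : ∀ f g : Polynomial K, f ≠ 0 → g ≠ 0 → ν (f * g) = ν f + ν g
  map_add : ∀ f g : Polynomial K, f ≠ 0 → g ≠ 0 → f + g ≠ 0 →
    min (ν f) (ν g) ≤ ν (f + g)
  nontrivial : ∃ a : K, a ≠ 0 ∧ ν (C a) ≠ 0
  nonneg_x : 0 ≤ ν X

/-- `ε(f) = max_{b ≥ 1, ∂_b f ≠ 0} (ν(f) - ν(∂_b f))/b`, where `∂_b` is the
`b`-th formal (Hasse) derivative.  (Terms with `∂_b f = 0` correspond to the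
value `-∞` and are omitted from the maximum.) -/
noncomputable def eps {K : Type*} [Field K] {Γ : Type*} [Field Γ] [LinearOrder Γ] [IsStrictOrderedRing Γ]
    (ν : Polynomial K → Γ) (f : Polynomial K) : Γ :=
  if h : ((Finset.Icc 1 f.natDegree).filter
      fun b => Polynomial.hasseDeriv b f ≠ 0).Nonempty then
    ((Finset.Icc 1 f.natDegree).filter
      fun b => Polynomial.hasseDeriv b f ≠ 0).sup' h
      fun b => (ν f - ν (Polynomial.hasseDeriv b f)) / (b : Γ)
  else 0

/-- A monic (nonconstant) polynomial `Q` is a key polynomial for `ν` if every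
`f ∈ K[x]` with `ε(f) ≥ ε(Q)` satisfies `deg f ≥ deg Q`. -/
def IsKeyPol {K : Type*} [Field K] {Γ : Type*} [Field Γ] [LinearOrder Γ] [IsStrictOrderedRing Γ]
    (ν : Polynomial K → Γ) (Q : Polynomial K) : Prop :=
  Q.Monic ∧ 1 ≤ Q.natDegree ∧
    ∀ f : Polynomial K, 1 ≤ f.natDegree → eps ν Q ≤ eps ν f →
      Q.natDegree ≤ f.natDegree

/-- The `i`-th coefficient `f_i` of the `q`-standard expansion
`f = Σ f_i q^i` (each `f_i = 0` or `deg f_i < deg q`), for `q` monic. -/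
noncomputable def qCoeff {K : Type*} [Field K] (q f : Polynomial K) (i : ℕ) :
    Polynomial K :=
  (f /ₘ q ^ i) %ₘ q

/-- The `q`-truncation `ν_q(f) = min_i ν(f_i q^i)` of `ν`, the minimum taken
over the nonzero coefficients of the `q`-standard expansion of `f`. -/
noncomputable def truncVal {K : Type*} [Field K] {Γ : Type*}
    [Field Γ] [LinearOrder Γ] [IsStrictOrderedRing Γ] (ν : Polynomial K → Γ) (q f : Polynomial K) : Γ :=
  if h : ((Finset.range (f.natDegree + 1)).filter
      fun i => qCoeff q f i ≠ 0).Nonempty then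
    ((Finset.range (f.natDegree + 1)).filter
      fun i => qCoeff q f i ≠ 0).inf' h
      fun i => ν (qCoeff q f i * q ^ i)
  else 0

/-- `I(Q) = {b : (ν(Q) - ν(∂_b Q))/b = ε(Q)}`. -/
def Iset {K : Type*} [Field K] {Γ : Type*} [Field Γ] [LinearOrder Γ] [IsStrictOrderedRing Γ]
    (ν : Polynomial K → Γ) (Q : Polynomial K) : Set ℕ :=
  {b | 1 ≤ b ∧ Polynomial.hasseDeriv b Q ≠ 0 ∧
    (ν Q - ν (Polynomial.hasseDeriv b Q)) / (b : Γ) = eps ν Q}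

/-- `S_Q(f) = {i : ν(f_i Q^i) = ν_Q(f)}` (over nonzero coefficients). -/
def Sset {K : Type*} [Field K] {Γ : Type*} [Field Γ] [LinearOrder Γ] [IsStrictOrderedRing Γ]
    (ν : Polynomial K → Γ) (q f : Polynomial K) : Set ℕ :=
  {i | qCoeff q f i ≠ 0 ∧ ν (qCoeff q f i * q ^ i) = truncVal ν q f}


variable {K : Type*} [Field K] {Γ : Type*} [Field Γ] [LinearOrder Γ] [IsStrictOrderedRing Γ]

section Aux

variable {K : Type*} [Field K] {Γ : Type*} [Field Γ] [LinearOrder Γ] [IsStrictOrderedRing Γ] {ν : Polynomial K → Γ}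

lemma val_one (hν : IsVal ν) : ν 1 = 0 := by
  have := hν.map_mul 1 1 one_ne_zero one_ne_zero
  rw [mul_one] at this; linarith

lemma val_neg (hν : IsVal ν) {f : Polynomial K} (hf : f ≠ 0) : ν (-f) = ν f := by
  have h1 : ν (-1 : Polynomial K) = 0 := by
    have := hν.map_mul (-1) (-1) (by simp) (by simp)
    rw [neg_mul_neg, mul_one, val_one hν] at this; linarith
  have := hν.map_mul (-1) f (by simp) hf
  rw [neg_one_mul] at this
  rw [this, h1, zero_add]

lemma val_add_eq (hν : IsVal ν) {f g : Polynomial K} (hf : f ≠ 0) (hlt : ν f < ν g) :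
    f + g ≠ 0 ∧ ν (f + g) = ν f := by
  rcases eq_or_ne g 0 with rfl | hg
  · simpa using hf
  have hne : f + g ≠ 0 := by
    intro h
    have hgf : g = -f := by linear_combination h
    rw [hgf, val_neg hν hf] at hlt; exact absurd hlt (lt_irrefl _)
  have h1 : min (ν f) (ν g) ≤ ν (f + g) := hν.map_add f g hf hg hne
  rw [min_eq_left hlt.le] at h1
  refine ⟨hne, le_antisymm ?_ h1⟩
  by_contra hlt2
  push_neg at hlt2
  have h2 := hν.map_add (f + g) (-g) hne (neg_ne_zero.2 hg) (by simpa using hf)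
  rw [add_neg_cancel_right, val_neg hν hg] at h2
  have : ν f < min (ν (f + g)) (ν g) := lt_min hlt2 hlt
  linarith

lemma val_sum_le (hν : IsVal ν) {ι : Type*} (S : Finset ι) (t : ι → Polynomial K) (c : Γ)
    (h : ∀ i ∈ S, t i = 0 ∨ (t i ≠ 0 ∧ c ≤ ν (t i))) :
    S.sum t = 0 ∨ (S.sum t ≠ 0 ∧ c ≤ ν (S.sum t)) := by
  classical
  induction S using Finset.induction_on with
  | empty => simp
  | @insert a S ha ih =>
    rw [Finset.sum_insert ha]
    have hih := ih (fun i hi => h i (Finset.mem_insert_of_mem hi))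
    rcases h a (Finset.mem_insert_self a S) with h0 | ⟨hane, hale⟩
    · rw [h0, zero_add]; exact hih
    rcases hih with h0 | ⟨hsne, hsle⟩
    · rw [h0, add_zero]; exact Or.inr ⟨hane, hale⟩
    by_cases hz : t a + S.sum t = 0
    · exact Or.inl hz
    exact Or.inr ⟨hz, le_trans (le_min hale hsle) (hν.map_add _ _ hane hsne hz)⟩

lemma val_sum_lt (hν : IsVal ν) {ι : Type*} (S : Finset ι) (t : ι → Polynomial K) (c : Γ)
    (h : ∀ i ∈ S, t i = 0 ∨ (t i ≠ 0 ∧ c < ν (t i))) :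
    S.sum t = 0 ∨ (S.sum t ≠ 0 ∧ c < ν (S.sum t)) := by
  classical
  induction S using Finset.induction_on with
  | empty => simp
  | @insert a S ha ih =>
    rw [Finset.sum_insert ha]
    have hih := ih (fun i hi => h i (Finset.mem_insert_of_mem hi))
    rcases h a (Finset.mem_insert_self a S) with h0 | ⟨hane, hale⟩
    · rw [h0, zero_add]; exact hih
    rcases hih with h0 | ⟨hsne, hsle⟩
    · rw [h0, add_zero]; exact Or.inr ⟨hane, hale⟩
    by_cases hz : t a + S.sum t = 0
    · exact Or.inl hz
    exact Or.inr ⟨hz, lt_of_lt_of_le (lt_min hale hsle) (hν.map_add _ _ hane hsne hz)⟩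

lemma hd_le {f : Polynomial K} {b : ℕ} (h : Polynomial.hasseDeriv b f ≠ 0) :
    b ≤ f.natDegree := by
  by_contra hb
  push_neg at hb
  apply h
  ext n
  rw [Polynomial.hasseDeriv_coeff, Polynomial.coeff_eq_zero_of_natDegree_lt (by omega),
    mul_zero, Polynomial.coeff_zero]

lemma hd_natDegree_ne_zero {f : Polynomial K} (hf : f ≠ 0) :
    Polynomial.hasseDeriv f.natDegree f ≠ 0 := by
  intro h
  have h0 : (Polynomial.hasseDeriv f.natDegree f).coeff 0 = 0 := by rw [h]; simp
  rw [Polynomial.hasseDeriv_coeff, zero_add, Nat.choose_self, Nat.cast_one, one_mul] at h0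
  exact hf (Polynomial.leadingCoeff_eq_zero.1 h0)

end Aux
section Aux2

variable {K : Type*} [Field K] {Γ : Type*} [Field Γ] [LinearOrder Γ] [IsStrictOrderedRing Γ] {ν : Polynomial K → Γ}

lemma le_eps {f : Polynomial K} {b : ℕ} (hb : 1 ≤ b) (h : Polynomial.hasseDeriv b f ≠ 0) :
    (ν f - ν (Polynomial.hasseDeriv b f)) / b ≤ eps ν f := by
  have hmem : b ∈ (Finset.Icc 1 f.natDegree).filter
      (fun b => Polynomial.hasseDeriv b f ≠ 0) :=
    Finset.mem_filter.2 ⟨Finset.mem_Icc.2 ⟨hb, hd_le h⟩, h⟩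
  rw [eps, dif_pos ⟨b, hmem⟩]
  exact Finset.le_sup' (fun b => (ν f - ν (Polynomial.hasseDeriv b f)) / (b : Γ)) hmem

lemma val_hd_ge {f : Polynomial K} {b : ℕ} (hb : 1 ≤ b) (h : Polynomial.hasseDeriv b f ≠ 0) :
    ν f - b * eps ν f ≤ ν (Polynomial.hasseDeriv b f) := by
  have hbp : (0 : Γ) < b := by exact_mod_cast hb
  have := le_eps (ν := ν) hb h
  rw [div_le_iff₀ hbp] at this
  nlinarith [this]

lemma eps_attained {f : Polynomial K} (hf : f ≠ 0) (hdeg : 1 ≤ f.natDegree) :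
    ∃ b, 1 ≤ b ∧ Polynomial.hasseDeriv b f ≠ 0 ∧
      (ν f - ν (Polynomial.hasseDeriv b f)) / b = eps ν f := by
  have hne : ((Finset.Icc 1 f.natDegree).filter
      (fun b => Polynomial.hasseDeriv b f ≠ 0)).Nonempty :=
    ⟨f.natDegree, Finset.mem_filter.2 ⟨Finset.mem_Icc.2 ⟨hdeg, le_refl _⟩,
      hd_natDegree_ne_zero hf⟩⟩
  rw [eps, dif_pos hne]
  obtain ⟨b, hbS, hb⟩ := Finset.exists_mem_eq_sup' hne
    (fun b => (ν f - ν (Polynomial.hasseDeriv b f)) / (b : Γ))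
  obtain ⟨hbI, hbne⟩ := Finset.mem_filter.1 hbS
  exact ⟨b, (Finset.mem_Icc.1 hbI).1, hbne, hb.symm⟩

lemma eps_lt_of_key {Q : Polynomial K} (hQ : IsKeyPol ν Q) {p : Polynomial K}
    (h1 : 1 ≤ p.natDegree) (h2 : p.natDegree < Q.natDegree) : eps ν p < eps ν Q := by
  by_contra h
  push_neg at h
  exact absurd (hQ.2.2 p h1 h) (by omega)

lemma eps_of_natDegree_eq_zero {p : Polynomial K} (h : p.natDegree = 0) : eps ν p = 0 := by
  rw [eps, dif_neg]
  rw [h, Finset.Icc_eq_empty (by omega), Finset.filter_empty]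
  exact Finset.not_nonempty_empty

lemma eps_mul_le (hν : IsVal ν) {f g : Polynomial K} (hf : f ≠ 0) (hg : g ≠ 0) :
    eps ν (f * g) ≤ max (eps ν f) (eps ν g) := by
  set M := max (eps ν f) (eps ν g) with hM
  have boundf : ∀ i, Polynomial.hasseDeriv i f ≠ 0 → ν f - i * M ≤ ν (Polynomial.hasseDeriv i f) := by
    intro i hi
    rcases Nat.eq_zero_or_pos i with rfl | hi1
    · simp [Polynomial.hasseDeriv_zero']
    · have h1 := val_hd_ge (ν := ν) hi1 hi
      have h2 : (i : Γ) * eps ν f ≤ i * M :=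
        mul_le_mul_of_nonneg_left (le_max_left _ _) (by positivity)
      linarith
  have boundg : ∀ i, Polynomial.hasseDeriv i g ≠ 0 → ν g - i * M ≤ ν (Polynomial.hasseDeriv i g) := by
    intro i hi
    rcases Nat.eq_zero_or_pos i with rfl | hi1
    · simp [Polynomial.hasseDeriv_zero']
    · have h1 := val_hd_ge (ν := ν) hi1 hi
      have h2 : (i : Γ) * eps ν g ≤ i * M :=
        mul_le_mul_of_nonneg_left (le_max_right _ _) (by positivity)
      linarith
  by_cases hne : ((Finset.Icc 1 (f * g).natDegree).filter
      (fun b => Polynomial.hasseDeriv b (f * g) ≠ 0)).Nonempty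
  · rw [eps, dif_pos hne]
    apply Finset.sup'_le
    intro b hb
    obtain ⟨hbI, hbne⟩ := Finset.mem_filter.1 hb
    have hb1 : 1 ≤ b := (Finset.mem_Icc.1 hbI).1
    have hbp : (0 : Γ) < b := by exact_mod_cast hb1
    rw [div_le_iff₀ hbp]
    have hfg := hν.map_mul f g hf hg
    suffices hS : ν f + ν g - b * M ≤ ν (Polynomial.hasseDeriv b (f * g)) by
      nlinarith [hS]
    rw [Polynomial.hasseDeriv_mul] at hbne ⊢
    have hterms : ∀ ij ∈ Finset.HasAntidiagonal.antidiagonal b,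
        (fun ij : ℕ × ℕ => Polynomial.hasseDeriv ij.1 f * Polynomial.hasseDeriv ij.2 g) ij = 0 ∨
        ((fun ij : ℕ × ℕ => Polynomial.hasseDeriv ij.1 f * Polynomial.hasseDeriv ij.2 g) ij ≠ 0 ∧
          ν f + ν g - b * M ≤ ν ((fun ij : ℕ × ℕ => Polynomial.hasseDeriv ij.1 f * Polynomial.hasseDeriv ij.2 g) ij)) := by
      intro ij hij
      dsimp only
      by_cases h1 : Polynomial.hasseDeriv ij.1 f = 0
      · exact Or.inl (by rw [h1, zero_mul])
      by_cases h2 : Polynomial.hasseDeriv ij.2 g = 0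
      · exact Or.inl (by rw [h2, mul_zero])
      refine Or.inr ⟨mul_ne_zero h1 h2, ?_⟩
      rw [hν.map_mul _ _ h1 h2]
      have e1 := boundf ij.1 h1
      have e2 := boundg ij.2 h2
      have hsum : ij.1 + ij.2 = b := Finset.HasAntidiagonal.mem_antidiagonal.1 hij
      have hcast : (ij.1 : Γ) * M + (ij.2 : Γ) * M = b * M := by
        rw [← add_mul, ← Nat.cast_add, hsum]
      linarith
    rcases val_sum_le hν (Finset.HasAntidiagonal.antidiagonal b)
        (fun ij => Polynomial.hasseDeriv ij.1 f * Polynomial.hasseDeriv ij.2 g)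
        (ν f + ν g - b * M) hterms with h0 | ⟨_, hle⟩
    · exact absurd h0 hbne
    · exact hle
  · rw [eps, dif_neg hne]
    have hd0 : (f * g).natDegree = 0 := by
      by_contra hd
      exact hne ⟨(f * g).natDegree, Finset.mem_filter.2 ⟨Finset.mem_Icc.2 ⟨by omega, le_refl _⟩,
        hd_natDegree_ne_zero (mul_ne_zero hf hg)⟩⟩
    rw [Polynomial.natDegree_mul hf hg] at hd0
    have hf0 := eps_of_natDegree_eq_zero (ν := ν) (p := f) (by omega)
    have hg0 := eps_of_natDegree_eq_zero (ν := ν) (p := g) (by omega)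
    rw [hM, hf0, hg0, max_self]

end Aux2
section Aux3

variable {K : Type*} [Field K] {Γ : Type*} [Field Γ] [LinearOrder Γ] [IsStrictOrderedRing Γ] {ν : Polynomial K → Γ}

lemma eps_C_mul (hν : IsVal ν) {c : K} (hc : c ≠ 0) {p : Polynomial K} (hp : p ≠ 0) :
    eps ν (Polynomial.C c * p) = eps ν p := by
  have hCne : (Polynomial.C c : Polynomial K) ≠ 0 := Polynomial.C_ne_zero.2 hc
  have hderiv : ∀ b, Polynomial.hasseDeriv b (Polynomial.C c * p)
      = Polynomial.C c * Polynomial.hasseDeriv b p := by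
    intro b
    rw [← Polynomial.smul_eq_C_mul, ← Polynomial.smul_eq_C_mul, map_smul]
  have hdeg : (Polynomial.C c * p).natDegree = p.natDegree := by
    rw [Polynomial.natDegree_mul hCne hp, Polynomial.natDegree_C, zero_add]
  have hfilter : (Finset.Icc 1 (Polynomial.C c * p).natDegree).filter
        (fun b => Polynomial.hasseDeriv b (Polynomial.C c * p) ≠ 0)
      = (Finset.Icc 1 p.natDegree).filter
        (fun b => Polynomial.hasseDeriv b p ≠ 0) := by
    rw [hdeg]
    apply Finset.filter_congr
    intro b _
    simp [hderiv, hCne]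
  have hval : ∀ b, Polynomial.hasseDeriv b p ≠ 0 →
      ν (Polynomial.C c * p) - ν (Polynomial.hasseDeriv b (Polynomial.C c * p))
        = ν p - ν (Polynomial.hasseDeriv b p) := by
    intro b hb
    rw [hderiv, hν.map_mul _ _ hCne hp, hν.map_mul _ _ hCne hb]
    ring
  rw [eps, eps, hfilter]
  by_cases hS : ((Finset.Icc 1 p.natDegree).filter
      (fun b => Polynomial.hasseDeriv b p ≠ 0)).Nonempty
  · rw [dif_pos hS, dif_pos hS]
    apply Finset.sup'_congr _ rfl
    intro b hb
    rw [hval b (Finset.mem_filter.1 hb).2]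
  · rw [dif_neg hS, dif_neg hS]

lemma eps_prod_lt (hν : IsVal ν) {Q : Polynomial K} (hQ : IsKeyPol ν Q)
    {a b : Polynomial K} (ha : a ≠ 0) (hb : b ≠ 0)
    (hda : a.natDegree < Q.natDegree) (hdb : b.natDegree < Q.natDegree)
    (h1 : 1 ≤ (a * b).natDegree) : eps ν (a * b) < eps ν Q := by
  rw [Polynomial.natDegree_mul ha hb] at h1
  by_cases ha0 : a.natDegree = 0
  · have hb1 : 1 ≤ b.natDegree := by omega
    have hac : a = Polynomial.C (a.coeff 0) := Polynomial.eq_C_of_natDegree_eq_zero ha0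
    have hcne : a.coeff 0 ≠ 0 := fun hh => ha (by rw [hac, hh, map_zero])
    have heq : eps ν (a * b) = eps ν b := by
      conv_lhs => rw [hac]
      exact eps_C_mul hν hcne hb
    rw [heq]
    exact eps_lt_of_key hQ hb1 hdb
  by_cases hb0 : b.natDegree = 0
  · have ha1 : 1 ≤ a.natDegree := by omega
    have hbc : b = Polynomial.C (b.coeff 0) := Polynomial.eq_C_of_natDegree_eq_zero hb0
    have hcne : b.coeff 0 ≠ 0 := fun hh => hb (by rw [hbc, hh, map_zero])
    have heq : eps ν (a * b) = eps ν a := by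
      rw [mul_comm]
      conv_lhs => rw [hbc]
      exact eps_C_mul hν hcne ha
    rw [heq]
    exact eps_lt_of_key hQ ha1 hda
  have hlta : eps ν a < eps ν Q := eps_lt_of_key hQ (by omega) hda
  have hltb : eps ν b < eps ν Q := eps_lt_of_key hQ (by omega) hdb
  exact lt_of_le_of_lt (eps_mul_le hν ha hb) (max_lt hlta hltb)

end Aux3
section Core

open Finset.HasAntidiagonal (antidiagonal mem_antidiagonal)

variable {K : Type*} [Field K] {Γ : Type*} [Field Γ] [LinearOrder Γ] [IsStrictOrderedRing Γ] {ν : Polynomial K → Γ}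

lemma core_division (hν : IsVal ν) {Q : Polynomial K} (hQ : IsKeyPol ν Q)
    (f : Polynomial K) (hf : f ≠ 0) (hdf : f.natDegree < 2 * Q.natDegree)
    (hef : 1 ≤ f.natDegree → eps ν f < eps ν Q) :
    f %ₘ Q ≠ 0 ∧ ν (f %ₘ Q) = ν f ∧ (f /ₘ Q ≠ 0 → ν f < ν (f /ₘ Q * Q)) := by
  have hQm : Q.Monic := hQ.1
  have hQne : Q ≠ 0 := hQm.ne_zero
  set q := f /ₘ Q with hqdef
  set r := f %ₘ Q with hrdef
  have hdiv : r + Q * q = f := Polynomial.modByMonic_add_div f Q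
  have hrdeg : r.degree < Q.degree := Polynomial.degree_modByMonic_lt f hQm
  by_cases hq0 : q = 0
  · have hrf : r = f := by rw [← hdiv, hq0, mul_zero, add_zero]
    exact ⟨hrf ▸ hf, by rw [hrf], fun hc => absurd hq0 hc⟩
  have hQq : Q * q ≠ 0 := mul_ne_zero hQne hq0
  have hfdeg : f.natDegree = Q.natDegree + q.natDegree := by
    have h1 : r.degree < (Q * q).degree :=
      lt_of_lt_of_le hrdeg (Polynomial.degree_le_mul_left Q hq0)
    have h2 : f.degree = (Q * q).degree := by
      rw [← hdiv]; exact Polynomial.degree_add_eq_right_of_degree_lt h1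
    have h3 : f.natDegree = (Q * q).natDegree := by
      unfold Polynomial.natDegree; rw [h2]
    rw [h3, Polynomial.natDegree_mul hQne hq0]
  have hqdeg : q.natDegree < Q.natDegree := by
    have := hQ.2.1; omega
  have hfdeg1 : 1 ≤ f.natDegree := by have := hQ.2.1; omega
  have hE := hef hfdeg1
  set E := eps ν Q with hEdef
  have main : ¬ (r = 0 ∨ (r ≠ 0 ∧ ν q + ν Q ≤ ν r)) := by
    intro H
    have hνQq : ν (Q * q) = ν Q + ν q := hν.map_mul Q q hQne hq0
    have hνf : ν q + ν Q ≤ ν f := by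
      rcases H with h0 | ⟨hrne, hle⟩
      · rw [← hdiv, h0, zero_add, hνQq]; linarith
      · have hmin := hν.map_add r (Q * q) hrne hQq (by rw [hdiv]; exact hf)
        rw [hdiv, hνQq] at hmin
        exact le_trans (le_min (by linarith) (by linarith)) hmin
    obtain ⟨b, hb1, hbQ, hbE⟩ := eps_attained (ν := ν) hQne hQ.2.1
    have hbp : (0 : Γ) < b := by exact_mod_cast hb1
    have hbub : ν (Polynomial.hasseDeriv b Q) = ν Q - b * E := by
      rw [div_eq_iff (ne_of_gt hbp)] at hbE
      nlinarith [hbE]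
    have hmain_ne : Polynomial.hasseDeriv b Q * q ≠ 0 := mul_ne_zero hbQ hq0
    have hmain_val : ν (Polynomial.hasseDeriv b Q * q) = ν q + ν Q - b * E := by
      rw [hν.map_mul _ _ hbQ hq0, hbub]; ring
    set m := ν q + ν Q - (b : Γ) * E with hmdef
    have hmem : ((b, 0) : ℕ × ℕ) ∈ antidiagonal b := by simp
    have hsplit : Polynomial.hasseDeriv b f = Polynomial.hasseDeriv b Q * q +
        (Polynomial.hasseDeriv b r + ∑ ij ∈ (antidiagonal b).erase (b, 0),
          Polynomial.hasseDeriv ij.1 Q * Polynomial.hasseDeriv ij.2 q) := by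
      conv_lhs => rw [← hdiv]
      rw [map_add, Polynomial.hasseDeriv_mul, ← Finset.sum_erase_add _ _ hmem]
      simp only [Polynomial.hasseDeriv_zero']
      ring
    -- part A : hasseDeriv b r
    have hA : Polynomial.hasseDeriv b r = 0 ∨
        (Polynomial.hasseDeriv b r ≠ 0 ∧ m < ν (Polynomial.hasseDeriv b r)) := by
      by_cases hrb : Polynomial.hasseDeriv b r = 0
      · exact Or.inl hrb
      right
      have hrne : r ≠ 0 := by intro h0; rw [h0, map_zero] at hrb; exact hrb rfl
      have hler : ν q + ν Q ≤ ν r := by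
        rcases H with h0 | ⟨_, hle⟩
        · exact absurd h0 hrne
        · exact hle
      have hrdeg' : r.natDegree < Q.natDegree := Polynomial.natDegree_lt_natDegree hrne hrdeg
      have hrdeg1 : 1 ≤ r.natDegree := le_trans hb1 (hd_le hrb)
      have hepsr : eps ν r < E := eps_lt_of_key hQ hrdeg1 hrdeg'
      have hge := val_hd_ge (ν := ν) hb1 hrb
      have hbmul : (b : Γ) * eps ν r < (b : Γ) * E := by
        exact mul_lt_mul_of_pos_left hepsr hbp
      exact ⟨hrb, by rw [hmdef]; linarith⟩
    -- part B : the cross terms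
    have hB := val_sum_lt hν ((antidiagonal b).erase (b, 0))
      (fun ij => Polynomial.hasseDeriv ij.1 Q * Polynomial.hasseDeriv ij.2 q) m ?_
    rotate_left
    · intro ij hij
      obtain ⟨hijne, hijmem⟩ := Finset.mem_erase.1 hij
      have hijsum : ij.1 + ij.2 = b := mem_antidiagonal.1 hijmem
      by_cases h1 : Polynomial.hasseDeriv ij.1 Q = 0
      · exact Or.inl (by rw [h1, zero_mul])
      by_cases h2 : Polynomial.hasseDeriv ij.2 q = 0
      · exact Or.inl (by rw [h2, mul_zero])
      right
      have hj1 : 1 ≤ ij.2 := by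
        rcases Nat.eq_zero_or_pos ij.2 with hj0 | hj
        · exfalso; apply hijne
          have : ij.1 = b := by omega
          exact Prod.ext this hj0
        · exact hj
      have hq1 : 1 ≤ q.natDegree := le_trans hj1 (hd_le h2)
      have hepsq : eps ν q < E := eps_lt_of_key hQ hq1 hqdeg
      have hjp : (0 : Γ) < ij.2 := by exact_mod_cast hj1
      have e2 : ν q - ij.2 * eps ν q ≤ ν (Polynomial.hasseDeriv ij.2 q) :=
        val_hd_ge hj1 h2
      have e2' : (ij.2 : Γ) * eps ν q < ij.2 * E := mul_lt_mul_of_pos_left hepsq hjp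
      have e1 : ν Q - ij.1 * E ≤ ν (Polynomial.hasseDeriv ij.1 Q) := by
        rcases Nat.eq_zero_or_pos ij.1 with hi0 | hi1
        · rw [hi0]; simp [Polynomial.hasseDeriv_zero']
        · exact val_hd_ge hi1 h1
      have hcast : (ij.1 : Γ) * E + (ij.2 : Γ) * E = b * E := by
        rw [← add_mul, ← Nat.cast_add, hijsum]
      refine ⟨mul_ne_zero h1 h2, ?_⟩
      rw [hν.map_mul _ _ h1 h2, hmdef]
      linarith
    -- combine A and B
    have hRest : (Polynomial.hasseDeriv b r + ∑ ij ∈ (antidiagonal b).erase (b, 0),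
        Polynomial.hasseDeriv ij.1 Q * Polynomial.hasseDeriv ij.2 q) = 0 ∨
        ((Polynomial.hasseDeriv b r + ∑ ij ∈ (antidiagonal b).erase (b, 0),
        Polynomial.hasseDeriv ij.1 Q * Polynomial.hasseDeriv ij.2 q) ≠ 0 ∧
        m < ν (Polynomial.hasseDeriv b r + ∑ ij ∈ (antidiagonal b).erase (b, 0),
        Polynomial.hasseDeriv ij.1 Q * Polynomial.hasseDeriv ij.2 q)) := by
      rcases hA with hA0 | ⟨hAne, hAlt⟩
      · rw [hA0, zero_add]; exact hB
      rcases hB with hB0 | ⟨hBne, hBlt⟩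
      · rw [hB0, add_zero]; exact Or.inr ⟨hAne, hAlt⟩
      by_cases hz : (Polynomial.hasseDeriv b r + ∑ ij ∈ (antidiagonal b).erase (b, 0),
          Polynomial.hasseDeriv ij.1 Q * Polynomial.hasseDeriv ij.2 q) = 0
      · exact Or.inl hz
      exact Or.inr ⟨hz, lt_of_lt_of_le (lt_min hAlt hBlt) (hν.map_add _ _ hAne hBne hz)⟩
    have hdf' : Polynomial.hasseDeriv b f ≠ 0 ∧ ν (Polynomial.hasseDeriv b f) = m := by
      rw [hsplit]
      rcases hRest with h0 | ⟨hne', hlt⟩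
      · rw [h0, add_zero]; exact ⟨hmain_ne, hmain_val⟩
      · have hlt' : ν (Polynomial.hasseDeriv b Q * q) <
            ν (Polynomial.hasseDeriv b r + ∑ ij ∈ (antidiagonal b).erase (b, 0),
              Polynomial.hasseDeriv ij.1 Q * Polynomial.hasseDeriv ij.2 q) := by
          rw [hmain_val]; exact hlt
        have := val_add_eq hν hmain_ne hlt'
        exact ⟨this.1, this.2.trans hmain_val⟩
    have hle1 : (ν f - ν (Polynomial.hasseDeriv b f)) / b ≤ eps ν f := le_eps hb1 hdf'.1
    have hle2 : E ≤ (ν f - ν (Polynomial.hasseDeriv b f)) / b := by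
      rw [le_div_iff₀ hbp, hdf'.2, hmdef]
      nlinarith [hνf]
    linarith
  push_neg at main
  obtain ⟨hrne, h2⟩ := main
  have hlt : ν r < ν q + ν Q := h2 hrne
  have hνQq : ν (Q * q) = ν Q + ν q := hν.map_mul Q q hQne hq0
  have hfr := val_add_eq hν hrne (g := Q * q) (by rw [hνQq]; linarith)
  rw [hdiv] at hfr
  refine ⟨hrne, hfr.2.symm, fun _ => ?_⟩
  rw [hν.map_mul q Q hq0 hQne, hfr.2]
  linarith

end Core
section Main

variable {K : Type*} [Field K] {Γ : Type*} [Field Γ] [LinearOrder Γ] [IsStrictOrderedRing Γ] {ν : Polynomial K → Γ}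

lemma main_aux (hν : IsVal ν) {Q : Polynomial K} (hQ : IsKeyPol ν Q)
    (s : ℕ) (hs : 1 ≤ s) :
    ∀ h : Fin s → Polynomial K, (∀ i, h i ≠ 0) → (∀ i, (h i).natDegree < Q.natDegree) →
      (∏ i, h i) %ₘ Q ≠ 0 ∧ ν ((∏ i, h i) %ₘ Q) = ν (∏ i, h i) ∧
      ((∏ i, h i) /ₘ Q ≠ 0 → ν (∏ i, h i) < ν ((∏ i, h i) /ₘ Q * Q)) := by
  have hQm : Q.Monic := hQ.1
  have hQne : Q ≠ 0 := hQm.ne_zero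
  have hQ1 : 1 ≤ Q.natDegree := hQ.2.1
  induction s, hs using Nat.le_induction with
  | base =>
    intro h hne hdeg
    simp only [Fin.prod_univ_one]
    exact core_division hν hQ (h 0) (hne 0) (by have := hdeg 0; omega)
      (fun h1 => eps_lt_of_key hQ h1 (hdeg 0))
  | succ s hs ih =>
    intro h hne hdeg
    simp only [Fin.prod_univ_castSucc]
    set P := ∏ i : Fin s, h (Fin.castSucc i) with hPdef
    have hPne : P ≠ 0 := Finset.prod_ne_zero_iff.2 (fun i _ => hne _)
    obtain ⟨hr, hvr, hq⟩ := ih (fun i => h (Fin.castSucc i)) (fun i => hne _) (fun i => hdeg _)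
    set q := P /ₘ Q with hqdef
    set r := P %ₘ Q with hrdef
    have hdiv : r + Q * q = P := Polynomial.modByMonic_add_div P Q
    set hl := h (Fin.last s) with hldef
    have hlne : hl ≠ 0 := hne _
    set w := r * hl with hwdef
    have hwne : w ≠ 0 := mul_ne_zero hr hlne
    have hrdeg : r.natDegree < Q.natDegree :=
      Polynomial.natDegree_lt_natDegree hr (Polynomial.degree_modByMonic_lt P hQm)
    have hwdf : w.natDegree < 2 * Q.natDegree := by
      rw [hwdef, Polynomial.natDegree_mul hr hlne]
      have hhl := hdeg (Fin.last s)
      rw [← hldef] at hhl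
      omega
    obtain ⟨hr1, hvr1, hq1⟩ := core_division hν hQ w hwne hwdf
      (fun h1 => eps_prod_lt hν hQ hr hlne hrdeg (hdeg _) h1)
    set r1 := w %ₘ Q with hr1def
    set q1 := w /ₘ Q with hq1def
    have hdivw : r1 + Q * q1 = w := Polynomial.modByMonic_add_div w Q
    have huniq := Polynomial.div_modByMonic_unique (f := P * hl) (g := Q)
      (q1 + q * hl) r1 hQm
      ⟨by linear_combination hdivw + hdiv * hl, Polynomial.degree_modByMonic_lt w hQm⟩
    rw [huniq.1, huniq.2]
    have hνPhl : ν (P * hl) = ν P + ν hl := hν.map_mul _ _ hPne hlne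
    have hw : ν w = ν r + ν hl := hν.map_mul _ _ hr hlne
    refine ⟨hr1, by rw [hvr1, hw, hvr, hνPhl], ?_⟩
    intro hq'ne
    rw [hν.map_mul _ _ hq'ne hQne, hνPhl]
    by_cases hqz : q = 0
    · rw [hqz, zero_mul, add_zero] at hq'ne ⊢
      have := hq1 hq'ne
      rw [hν.map_mul _ _ hq'ne hQne] at this
      linarith
    by_cases hq1z : q1 = 0
    · rw [hq1z, zero_add] at hq'ne ⊢
      have hqQ := hq hqz
      rw [hν.map_mul _ _ hqz hQne] at hqQ
      rw [hν.map_mul _ _ hqz hlne]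
      linarith
    have hql : q * hl ≠ 0 := mul_ne_zero hqz hlne
    have hmin := hν.map_add q1 (q * hl) hq1z hql hq'ne
    have hb1 : ν P + ν hl < ν q1 + ν Q := by
      have := hq1 hq1z
      rw [hν.map_mul _ _ hq1z hQne] at this
      linarith
    have hb2 : ν P + ν hl < ν (q * hl) + ν Q := by
      have hqQ := hq hqz
      rw [hν.map_mul _ _ hqz hQne] at hqQ
      rw [hν.map_mul _ _ hqz hlne]
      linarith
    have hlb : ν P + ν hl - ν Q < min (ν q1) (ν (q * hl)) :=
      lt_min (by linarith) (by linarith)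
    linarith

end Main

/-- If `h_1, …, h_s` all have degree `< deg Q` for a key polynomial `Q`, and
`Π h_i = q Q + r` is the Euclidean division by `Q`, then
`ν(r) = ν(Π h_i) < ν(q Q)`. -/
theorem prod_modByMonic_val (ν : Polynomial K → Γ) (hν : IsVal ν)
    (Q : Polynomial K) (hQ : IsKeyPol ν Q) (s : ℕ) (hs : 1 ≤ s)
    (h : Fin s → Polynomial K) (hne : ∀ i, h i ≠ 0)
    (hdeg : ∀ i, (h i).natDegree < Q.natDegree) :
    (∏ i, h i) %ₘ Q ≠ 0 ∧
      ν ((∏ i, h i) %ₘ Q) = ν (∏ i, h i) ∧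
      ((∏ i, h i) /ₘ Q ≠ 0 → ν (∏ i, h i) < ν ((∏ i, h i) /ₘ Q * Q)) :=
  main_aux hν hQ s hs h hne hdeg
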